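/- Let p > 2 be prime, s ≥ 1, m ≥ 1, and let α be a p-adic integer. Let z = Σ_{j=1}^{s−1} ((−1)^(j+1)/j) α^j p^(2j−2) (a p-adic integer). Then Σ_{j=m}^{s−1} s(j,m) α^j p^(2j−1)/j! ≡ (p^(2m−1)/m!) z^m (mod p^s), where s(j,m) are Stirling numbers of the first kind. -/

import Mathlib

/-- Signed Stirling numbers of the first kind, defined by
`x(x-1)⋯(x-j+1) = ∑_m stirling1 j m * x^m`. -/
def stirling1 : ℕ → ℕ → ℤ
  | 0, 0 => 1
  | 0, _ + 1 => 0
  | j + 1, 0 => -(j : ℤ) * stirling1 j 0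
  | j + 1, m + 1 => stirling1 j m - (j : ℤ) * stirling1 j (m + 1)

set_option maxRecDepth 4000
set_option maxHeartbeats 1000000

lemma stirling1_zero_right : ∀ n : ℕ, 1 ≤ n → stirling1 n 0 = 0
  | 1, _ => by simp [stirling1]
  | (n+2), _ => by
    rw [stirling1, stirling1_zero_right (n+1) (by omega)]; ring

lemma stirling1_eq_zero : ∀ n m : ℕ, n < m → stirling1 n m = 0
  | 0, m+1, _ => by rw [stirling1]
  | n+1, m+1, h => by
    rw [stirling1, stirling1_eq_zero n m (by omega), stirling1_eq_zero n (m+1) (by omega)]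
    ring

open Polynomial Finset in
noncomputable def Lpoly (p N : ℕ) [Fact p.Prime] : Polynomial ℚ_[p] :=
  ∑ j ∈ Finset.Icc 1 N, Polynomial.C ((-1 : ℚ_[p])^(j+1) / j) * Polynomial.X^j

open Polynomial Finset

variable {p : ℕ} [Fact p.Prime]

lemma coeff_Lpoly (N k : ℕ) :
    (Lpoly p N).coeff k = if 1 ≤ k ∧ k ≤ N then (-1 : ℚ_[p])^(k+1) / k else 0 := by
  rw [Lpoly, finset_sum_coeff]
  simp only [coeff_C_mul, coeff_X_pow]
  simp only [mul_ite, mul_one, mul_zero]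
  rw [Finset.sum_ite_eq (Finset.Icc 1 N) k (fun j => (-1 : ℚ_[p])^(j+1) / j)]
  simp [Finset.mem_Icc]

lemma natDegree_Lpoly (N : ℕ) : (Lpoly p N).natDegree ≤ N := by
  apply Polynomial.natDegree_sum_le_of_forall_le
  intro j hj
  refine (Polynomial.natDegree_C_mul_le _ _).trans ?_
  simp only [natDegree_X_pow]
  exact (Finset.mem_Icc.mp hj).2

lemma derivative_Lpoly (N : ℕ) :
    derivative (Lpoly p N) = ∑ i ∈ Finset.range N, (-(X : Polynomial ℚ_[p]))^i := by
  rw [Lpoly, map_sum]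
  rw [← Finset.Ico_add_one_right_eq_Icc, Finset.sum_Ico_eq_sum_range]
  apply Finset.sum_congr (by norm_num)
  intro i _
  rw [Polynomial.derivative_C_mul_X_pow]
  have h1 : ((-1 : ℚ_[p])^(1+i+1) / (1+i : ℕ)) * (1+i : ℕ) = (-1)^i := by
    have hne : (((1:ℕ)+i : ℕ) : ℚ_[p]) ≠ 0 := Nat.cast_ne_zero.mpr (by omega)
    rw [div_mul_cancel₀ _ hne, show 1+i+1 = i+2 by omega, pow_add]
    norm_num
  rw [h1, show 1+i-1 = i from by omega, neg_pow (X:Polynomial ℚ_[p]) i]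
  simp only [map_pow, map_neg, map_one]

lemma one_add_X_mul_derivative (N : ℕ) :
    (1 + X) * derivative (Lpoly p N) = 1 - (-(X : Polynomial ℚ_[p]))^N := by
  rw [derivative_Lpoly]
  have := geom_sum_mul (-(X : Polynomial ℚ_[p])) N
  have h : (∑ i ∈ Finset.range N, (-(X : Polynomial ℚ_[p]))^i) * (-X - 1) = (-X)^N - 1 := this
  linear_combination -h

lemma coeff_X_mul_derivative (q : Polynomial ℚ_[p]) (n : ℕ) :
    (X * derivative q).coeff n = n * q.coeff n := by
  cases n with
  | zero => simp [Polynomial.mul_coeff_zero]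
  | succ k => rw [Polynomial.coeff_X_mul, Polynomial.coeff_derivative]; push_cast; ring

lemma coeff_Lpoly_pow (N : ℕ) :
    ∀ n, n ≤ N → ∀ m, ((Lpoly p N) ^ m).coeff n
      = (m.factorial : ℚ_[p]) * ((stirling1 n m : ℤ) : ℚ_[p]) / (n.factorial : ℚ_[p]) := by
  intro n
  induction n with
  | zero =>
    intro _ m
    have h0 : (Lpoly p N).coeff 0 = 0 := by rw [coeff_Lpoly]; simp
    have hc : ((Lpoly p N)^m).coeff 0 = ((Lpoly p N).coeff 0)^m := by
      induction m with
      | zero => simp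
      | succ k ih => rw [pow_succ, Polynomial.mul_coeff_zero, ih, pow_succ]
    rw [hc, h0]
    cases m with
    | zero => simp [stirling1]
    | succ k => simp [stirling1]
  | succ n ih =>
    intro hn m
    have hn' : n ≤ N := by omega
    cases m with
    | zero =>
      simp only [pow_zero, Polynomial.coeff_one]
      rw [stirling1_zero_right (n+1) (by omega)]
      simp
    | succ m =>
      have hid : (1 + X) * derivative ((Lpoly p N) ^ (m+1))
          = Polynomial.C ((m:ℚ_[p])+1) * ((Lpoly p N) ^ m * (1 - (-(X:Polynomial ℚ_[p]))^N)) := by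
        rw [Polynomial.derivative_pow]
        have h2 := one_add_X_mul_derivative (p:=p) N
        have h3 : ((m+1 : ℕ) : ℚ_[p]) = (m : ℚ_[p]) + 1 := by push_cast; ring
        rw [h3, Nat.add_sub_cancel]
        linear_combination (Polynomial.C ((m:ℚ_[p])+1) * (Lpoly p N)^m) * h2
      have hcoeff := congrArg (fun q => Polynomial.coeff q n) hid
      simp only [add_mul, one_mul, Polynomial.coeff_add] at hcoeff
      rw [coeff_X_mul_derivative, Polynomial.coeff_derivative] at hcoeff
      rw [Polynomial.coeff_C_mul] at hcoeff
      have hvan : ((Lpoly p N) ^ m * (1 - (-(X:Polynomial ℚ_[p]))^N)).coeff n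
          = ((Lpoly p N) ^ m).coeff n := by
        rw [mul_sub, mul_one, Polynomial.coeff_sub]
        have : ((Lpoly p N) ^ m * (-(X:Polynomial ℚ_[p]))^N).coeff n = 0 := by
          have hre : (Lpoly p N) ^ m * (-(X:Polynomial ℚ_[p]))^N
              = ((-1:Polynomial ℚ_[p])^N * (Lpoly p N) ^ m) * X^N := by
            rw [neg_pow (X:Polynomial ℚ_[p]) N]; ring
          rw [hre, Polynomial.coeff_mul_X_pow']
          simp [Nat.not_le.mpr (show n < N by omega)]
        rw [this, sub_zero]
      rw [hvan, ih hn' m, ih hn' (m+1)] at hcoeff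
      -- hcoeff : (L^{m+1}).coeff (n+1) * (n+1) + n * ((m+1)! * s(n,m+1)/n!)
      --        = (m+1) * (m! * s(n,m)/n!)
      have hrec : (stirling1 (n+1) (m+1) : ℚ_[p])
          = (stirling1 n m : ℤ) - (n : ℚ_[p]) * (stirling1 n (m+1) : ℤ) := by
        rw [show stirling1 (n+1) (m+1) = stirling1 n m - (n : ℤ) * stirling1 n (m+1) from rfl]
        push_cast
        ring
      have hnfac : ((n.factorial : ℚ_[p])) ≠ 0 := Nat.cast_ne_zero.mpr n.factorial_ne_zero
      have hnfac1 : (((n+1).factorial : ℚ_[p])) ≠ 0 := Nat.cast_ne_zero.mpr (n+1).factorial_ne_zero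
      have hn1 : ((n:ℚ_[p]) + 1) ≠ 0 := by
        have : (((n+1:ℕ)) : ℚ_[p]) ≠ 0 := Nat.cast_ne_zero.mpr (by omega)
        push_cast at this
        exact this
      have hfacs : (((n+1).factorial : ℚ_[p])) = ((n:ℚ_[p])+1) * (n.factorial : ℚ_[p]) := by
        rw [Nat.factorial_succ]
        push_cast
        ring
      have hfacm : (((m+1).factorial : ℚ_[p])) = ((m:ℚ_[p])+1) * (m.factorial : ℚ_[p]) := by
        rw [Nat.factorial_succ]
        push_cast
        ring
      have goal' : ((Lpoly p N) ^ (m+1)).coeff (n+1) * ((n:ℚ_[p])+1)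
          = ((m+1).factorial : ℚ_[p]) * ((stirling1 (n+1) (m+1) : ℤ) : ℚ_[p])
              / ((n.factorial : ℚ_[p])) := by
        rw [hrec, hfacm]
        rw [hfacm] at hcoeff
        push_cast at hcoeff ⊢
        field_simp at hcoeff ⊢
        linear_combination hcoeff
      have h5 := congrArg (fun x => x / ((n:ℚ_[p])+1)) goal'
      simp only [mul_div_assoc] at h5
      rw [div_self hn1, mul_one] at h5
      rw [h5, hfacs, div_div]
      ring

lemma padicValNat_le_sub_one (j : ℕ) (hj : 1 ≤ j) : padicValNat p j ≤ j - 1 := by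
  have hp := Fact.out (p := p.Prime)
  have hdvd : p ^ (padicValNat p j) ∣ j := pow_padicValNat_dvd
  have hle : p ^ (padicValNat p j) ≤ j := Nat.le_of_dvd (by omega) hdvd
  by_contra hcon
  have h1 : j ≤ padicValNat p j := by omega
  have h2 : j < 2 ^ j := Nat.lt_two_pow_self
  have h3 : (2:ℕ) ^ j ≤ p ^ j := Nat.pow_le_pow_left hp.two_le j
  have h4 : (p:ℕ) ^ j ≤ p ^ (padicValNat p j) := Nat.pow_le_pow_right hp.pos h1
  have h5 : p ^ j ≤ j := le_trans h4 hle
  omega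

lemma norm_natCast_eq (j : ℕ) (hj : j ≠ 0) :
    ‖((j:ℕ) : ℚ_[p])‖ = (p:ℝ)^(-(padicValNat p j : ℤ)) := by
  rw [Padic.norm_eq_zpow_neg_valuation (by exact_mod_cast Nat.cast_ne_zero.mpr hj),
    Padic.valuation_natCast]

lemma norm_inv_natCast_le (j : ℕ) (hj : 1 ≤ j) :
    ‖((j:ℕ) : ℚ_[p])⁻¹‖ ≤ (p:ℝ)^((j:ℤ)-1) := by
  have hp := Fact.out (p := p.Prime)
  have h1 : (1:ℝ) < p := by exact_mod_cast hp.one_lt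
  rw [norm_inv, norm_natCast_eq j (by omega), ← zpow_neg, neg_neg]
  apply zpow_le_zpow_right₀ (le_of_lt h1)
  have := padicValNat_le_sub_one (p := p) j hj
  omega

lemma norm_coeff_Lpoly_le (N k : ℕ) :
    ‖(Lpoly p N).coeff k‖ ≤ (p:ℝ)^((k:ℤ)-1) := by
  have hp := Fact.out (p := p.Prime)
  have h1 : (1:ℝ) < p := by exact_mod_cast hp.one_lt
  rw [coeff_Lpoly]
  split
  · next h =>
    rw [div_eq_mul_inv, norm_mul, norm_pow, norm_neg, norm_one, one_pow, one_mul]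
    exact norm_inv_natCast_le k h.1
  · simp only [norm_zero]
    positivity

lemma norm_coeff_Lpoly_pow_le (N : ℕ) : ∀ m n : ℕ,
    ‖((Lpoly p N ^ m)).coeff n‖ ≤ (p:ℝ)^((n:ℤ)-m) := by
  have hp := Fact.out (p := p.Prime)
  have h1 : (1:ℝ) < p := by exact_mod_cast hp.one_lt
  intro m
  induction m with
  | zero =>
    intro n
    rw [pow_zero, Polynomial.coeff_one]
    split
    · next h => subst h; simp
    · simp only [norm_zero]; positivity
  | succ m ih =>
    intro n
    rw [pow_succ, Polynomial.coeff_mul]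
    apply IsUltrametricDist.norm_sum_le_of_forall_le_of_nonneg (by positivity)
    intro x hx
    have hxn : x.1 + x.2 = n := Finset.HasAntidiagonal.mem_antidiagonal.mp hx
    rw [norm_mul]
    calc ‖(Lpoly p N ^ m).coeff x.1‖ * ‖(Lpoly p N).coeff x.2‖
        ≤ (p:ℝ)^((x.1:ℤ)-m) * (p:ℝ)^((x.2:ℤ)-1) := by
          apply mul_le_mul (ih x.1) (norm_coeff_Lpoly_le N x.2) (norm_nonneg _) (by positivity)
      _ = (p:ℝ)^((n:ℤ)-(m+1)) := by
          rw [← zpow_add₀ (by positivity : (p:ℝ) ≠ 0)]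
          congr 1
          omega

lemma padicValNat_factorial_le' (hp3 : 2 < p) (m : ℕ) (hm : 1 ≤ m) :
    padicValNat p (m.factorial) ≤ m - 1 := by
  have hleg := sub_one_mul_padicValNat_factorial (p := p) m
  have h2 : 2 * padicValNat p (m.factorial) ≤ (p-1) * padicValNat p (m.factorial) :=
    Nat.mul_le_mul_right _ (by omega)
  have h3 : (p-1) * padicValNat p (m.factorial) ≤ m := by rw [hleg]; omega
  omega

lemma norm_inv_factorial_le (hp3 : 2 < p) (m : ℕ) (hm : 1 ≤ m) :
    ‖((m.factorial : ℕ) : ℚ_[p])⁻¹‖ ≤ (p:ℝ)^((m:ℤ)-1) := by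
  have hp := Fact.out (p := p.Prime)
  have h1 : (1:ℝ) < p := by exact_mod_cast hp.one_lt
  rw [norm_inv, norm_natCast_eq _ m.factorial_ne_zero, ← zpow_neg, neg_neg]
  apply zpow_le_zpow_right₀ h1.le
  have := padicValNat_factorial_le' hp3 m hm
  omega

theorem stirling_sum_reduction (p : ℕ) [Fact p.Prime] (hp : 2 < p) (s m : ℕ)
    (hs : 1 ≤ s) (hm : 1 ≤ m) (α : ℤ_[p]) :
    ‖(∑ j ∈ Finset.Icc m (s - 1),
          (stirling1 j m : ℚ_[p]) * (α : ℚ_[p]) ^ j * (p : ℚ_[p]) ^ (2 * j - 1) /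
            (j.factorial : ℚ_[p])) -
        (p : ℚ_[p]) ^ (2 * m - 1) / (m.factorial : ℚ_[p]) *
          (∑ j ∈ Finset.Icc 1 (s - 1),
              ((-1 : ℚ_[p]) ^ (j + 1) / (j : ℚ_[p])) * (α : ℚ_[p]) ^ j *
                (p : ℚ_[p]) ^ (2 * j - 2)) ^ m‖ ≤ (p : ℝ) ^ (-(s : ℤ)) := by
  have hpprime := Fact.out (p := p.Prime)
  have hp0 : ((p:ℕ) : ℚ_[p]) ≠ 0 := Nat.cast_ne_zero.mpr hpprime.ne_zero
  have hp1R : (1:ℝ) < p := by exact_mod_cast hpprime.one_lt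
  have hp0R : (0:ℝ) < p := by positivity
  set N := s - 1 with hN
  set y : ℚ_[p] := (α : ℚ_[p]) * (p:ℚ_[p])^2 with hy
  set G : ℕ → ℚ_[p] := fun n =>
    (Lpoly p N ^ m).coeff n * y^n * (((p:ℕ):ℚ_[p]) * m.factorial)⁻¹ with hG
  have hmf0 : ((m.factorial : ℕ) : ℚ_[p]) ≠ 0 := Nat.cast_ne_zero.mpr m.factorial_ne_zero
  -- step 1 : p^2 * inner sum = eval y (Lpoly p N)
  have hZ : (p:ℚ_[p])^2 * (∑ j ∈ Finset.Icc 1 N,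
        ((-1 : ℚ_[p]) ^ (j + 1) / (j : ℚ_[p])) * (α : ℚ_[p]) ^ j * (p : ℚ_[p]) ^ (2 * j - 2))
      = Polynomial.eval y (Lpoly p N) := by
    rw [Lpoly, Polynomial.eval_finset_sum, Finset.mul_sum]
    apply Finset.sum_congr rfl
    intro j hj
    have hj1 : 1 ≤ j := (Finset.mem_Icc.mp hj).1
    simp only [Polynomial.eval_mul, Polynomial.eval_C, Polynomial.eval_pow, Polynomial.eval_X]
    rw [hy, mul_pow, ← pow_mul]
    have : (p:ℚ_[p])^(2*j) = (p:ℚ_[p])^2 * (p:ℚ_[p])^(2*j-2) := by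
      rw [← pow_add]; congr 1; omega
    rw [this]; ring
  -- step 2 : RHS = sum of G over range (m*N+1)
  have hdeg : (Lpoly p N ^ m).natDegree < m*N+1 := by
    have h1 : (Lpoly p N ^ m).natDegree ≤ m * (Lpoly p N).natDegree :=
      Polynomial.natDegree_pow_le
    have h2 := natDegree_Lpoly (p := p) N
    have := Nat.mul_le_mul_left m h2
    omega
  have hRHS : (p : ℚ_[p]) ^ (2 * m - 1) / (m.factorial : ℚ_[p]) *
          (∑ j ∈ Finset.Icc 1 N,
              ((-1 : ℚ_[p]) ^ (j + 1) / (j : ℚ_[p])) * (α : ℚ_[p]) ^ j *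
                (p : ℚ_[p]) ^ (2 * j - 2)) ^ m
      = ∑ n ∈ Finset.range (m*N+1), G n := by
    have hsum : ∑ n ∈ Finset.range (m*N+1), G n
        = Polynomial.eval y (Lpoly p N ^ m) * (((p:ℕ):ℚ_[p]) * m.factorial)⁻¹ := by
      rw [Polynomial.eval_eq_sum_range' hdeg, Finset.sum_mul]
    rw [hsum, Polynomial.eval_pow, ← hZ]
    have hpow : (p:ℚ_[p])^(2*m) = (p:ℚ_[p])^(2*m-1) * p := by
      rw [← pow_succ]; congr 1; omega
    rw [mul_pow, ← pow_mul, hpow]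
    field_simp
  -- split range
  have hle : s ≤ m*N+1 := by
    have : N ≤ m*N := Nat.le_mul_of_pos_left N (by omega)
    omega
  have hsplit : ∑ n ∈ Finset.range (m*N+1), G n
      = ∑ n ∈ Finset.range s, G n + ∑ n ∈ Finset.Ico s (m*N+1), G n := by
    rw [Finset.range_eq_Ico, Finset.range_eq_Ico]
    exact (Finset.sum_Ico_consecutive _ (Nat.zero_le s) hle).symm
  -- first part equals LHS
  have hLHS : ∑ j ∈ Finset.Icc m N,
        (stirling1 j m : ℚ_[p]) * (α : ℚ_[p]) ^ j * (p : ℚ_[p]) ^ (2 * j - 1) /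
          (j.factorial : ℚ_[p])
      = ∑ n ∈ Finset.range s, G n := by
    have hsub : Finset.Icc m N ⊆ Finset.range s := by
      intro x hx
      have := (Finset.mem_Icc.mp hx).2
      simp only [Finset.mem_range]
      omega
    rw [← Finset.sum_subset hsub ?van]
    case van =>
      intro x hx hxn
      have hxs : x ≤ N := by
        have := Finset.mem_range.mp hx
        omega
      have hxm : x < m := by
        rcases Finset.mem_Icc.not.mp hxn with h
        omega
      rw [hG]
      simp only
      rw [coeff_Lpoly_pow N x hxs m, stirling1_eq_zero x m hxm]
      simp
    apply Finset.sum_congr rfl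
    intro n hn
    obtain ⟨hmn, hnN⟩ := Finset.mem_Icc.mp hn
    rw [hG]
    simp only
    rw [coeff_Lpoly_pow N n hnN m, hy, mul_pow, ← pow_mul]
    have hpn : (p:ℚ_[p])^(2*n) = (p:ℚ_[p])^(2*n-1) * p := by
      rw [← pow_succ]; congr 1; omega
    rw [hpn]
    have hnf0 : ((n.factorial : ℕ) : ℚ_[p]) ≠ 0 := Nat.cast_ne_zero.mpr n.factorial_ne_zero
    field_simp
  -- rewrite goal as a single tail sum
  have main_eq : (∑ j ∈ Finset.Icc m N,
        (stirling1 j m : ℚ_[p]) * (α : ℚ_[p]) ^ j * (p : ℚ_[p]) ^ (2 * j - 1) /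
          (j.factorial : ℚ_[p])) -
      (p : ℚ_[p]) ^ (2 * m - 1) / (m.factorial : ℚ_[p]) *
        (∑ j ∈ Finset.Icc 1 N,
            ((-1 : ℚ_[p]) ^ (j + 1) / (j : ℚ_[p])) * (α : ℚ_[p]) ^ j *
              (p : ℚ_[p]) ^ (2 * j - 2)) ^ m
      = -∑ n ∈ Finset.Ico s (m*N+1), G n := by
    rw [hRHS, hsplit, hLHS]
    ring
  rw [main_eq, norm_neg]
  -- ultrametric bound
  apply IsUltrametricDist.norm_sum_le_of_forall_le_of_nonneg (by positivity)
  intro n hn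
  have hsn : s ≤ n := (Finset.mem_Ico.mp hn).1
  have hyle : ‖y‖ ≤ ((p:ℝ))^(-2:ℤ) := by
    rw [hy, norm_mul, norm_pow, Padic.norm_p]
    calc ‖(α:ℚ_[p])‖ * ((p:ℝ)⁻¹)^2 ≤ 1 * ((p:ℝ)⁻¹)^2 := by
          gcongr
          exact α.2
      _ = (p:ℝ)^(-2:ℤ) := by
          rw [one_mul, inv_pow, ← zpow_natCast (p:ℝ) 2, ← zpow_neg]
          norm_num
  have hpinv : ‖(((p:ℕ)):ℚ_[p])⁻¹‖ = (p:ℝ) := by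
    rw [norm_inv, Padic.norm_p, inv_inv]
  calc ‖G n‖ = ‖(Lpoly p N ^ m).coeff n‖ * ‖y‖^n
        * ((p:ℝ) * ‖((m.factorial:ℕ):ℚ_[p])⁻¹‖) := by
        rw [hG]
        simp only
        rw [mul_inv, norm_mul, norm_mul, norm_mul, norm_pow, hpinv]
    _ ≤ (p:ℝ)^((n:ℤ)-m) * ((p:ℝ)^(-2:ℤ))^n * ((p:ℝ) * (p:ℝ)^((m:ℤ)-1)) := by
        gcongr
        · exact norm_coeff_Lpoly_pow_le N m n
        · exact norm_inv_factorial_le hp m hm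
    _ = (p:ℝ)^(-(n:ℤ)) := by
        have hpne : (p:ℝ) ≠ 0 := ne_of_gt hp0R
        have h1 : (p:ℝ) * (p:ℝ)^((m:ℤ)-1) = (p:ℝ)^(m:ℤ) := by
          rw [mul_comm, ← zpow_add_one₀ hpne]
          norm_num
        rw [h1, ← zpow_natCast ((p:ℝ)^(-2:ℤ)) n, ← zpow_mul, ← zpow_add₀ hpne,
          ← zpow_add₀ hpne]
        congr 1
        ring
    _ ≤ (p:ℝ)^(-(s:ℤ)) := by
        apply zpow_le_zpow_right₀ hp1R.le
        omega
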